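/- Let O be a DVR with uniformizer p and valuation v_p, let n ≥ 2, and let γ = diag(p^{nr−i}, p^i, 1, ..., 1) be an n×n diagonal matrix with 0 ≤ i ≤ nr/2. Let P be the parabolic subgroup of GL_n(O) of block upper triangular matrices with blocks of sizes (1, n−1), and P⁻ the opposite block lower triangular subgroup. Then for every X ∈ P and Y ∈ P⁻ (so Y⁻¹ ∈ P⁻), the (1,1)-cofactor c(XγY⁻¹) := det of the matrix obtained by deleting the first row and first column of XγY⁻¹ satisfies v_p(c(XγY⁻¹)) ≥ i. -/

import Mathlib

open Matrix IsDiscreteValuationRing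

/-- Let `O` be a DVR with uniformizer `p`, `γ = diag(p^(nr−i), p^i, 1, …, 1)` of size `n ≥ 2`,
`X` in the block upper triangular parabolic `P` (blocks of sizes `(1, n−1)`), and `Y⁻¹` in the
opposite parabolic `P⁻`.  Then the `(1,1)`-cofactor of `X·γ·Y⁻¹` (the determinant of the
matrix obtained by deleting the first row and column) has valuation `≥ i`. -/
theorem cofactor_val_ge {O : Type*} [CommRing O] [IsDomain O] [IsDiscreteValuationRing O]
    (p : O) (hp : Irreducible p) (n r i : ℕ) (hi : 2 * i ≤ (n + 2) * r)
    (γ : Matrix (Fin (n + 2)) (Fin (n + 2)) O)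
    (hγ : γ = Matrix.diagonal (fun j =>
      if j = 0 then p ^ ((n + 2) * r - i) else if j = 1 then p ^ i else 1))
    (X Y : GL (Fin (n + 2)) O)
    (hX : ∀ a : Fin (n + 2), a ≠ 0 → (X : Matrix (Fin (n + 2)) (Fin (n + 2)) O) a 0 = 0)
    (hY : ∀ b : Fin (n + 2), b ≠ 0 →
      ((Y⁻¹ : GL (Fin (n + 2)) O) : Matrix (Fin (n + 2)) (Fin (n + 2)) O) 0 b = 0) :
    (i : ℕ∞) ≤ addVal O
      (Matrix.det (((X : Matrix (Fin (n + 2)) (Fin (n + 2)) O) * γ *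
        ((Y⁻¹ : GL (Fin (n + 2)) O) : Matrix (Fin (n + 2)) (Fin (n + 2)) O)).submatrix
          Fin.succ Fin.succ)) := by
  set Xm := (X : Matrix (Fin (n + 2)) (Fin (n + 2)) O)
  set Ym := ((Y⁻¹ : GL (Fin (n + 2)) O) : Matrix (Fin (n + 2)) (Fin (n + 2)) O)
  set A : Matrix (Fin (n + 1)) (Fin (n + 1)) O := Xm.submatrix Fin.succ Fin.succ
  set B : Matrix (Fin (n + 1)) (Fin (n + 1)) O := Ym.submatrix Fin.succ Fin.succ
  set e : Fin (n + 1) → O := fun j => if j = 0 then p ^ i else 1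
  have key : (Xm * γ * Ym).submatrix Fin.succ Fin.succ = A * Matrix.diagonal e * B := by
    ext a b
    simp only [Matrix.submatrix_apply, Matrix.mul_apply, hγ, Matrix.mul_diagonal,
      Matrix.diagonal_apply, A, B, e]
    rw [Fin.sum_univ_succ]
    rw [hY b.succ (Fin.succ_ne_zero b)]
    simp only [mul_zero, zero_add]
    refine Finset.sum_congr rfl fun j _ => ?_
    have h0 : (j.succ : Fin (n + 2)) ≠ 0 := Fin.succ_ne_zero j
    have h1 : (j.succ : Fin (n + 2)) = 1 ↔ j = 0 := by
      constructor
      · intro h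
        have := Fin.succ_injective _ (a₁ := j) (a₂ := 0) (by simpa using h)
        exact this
      · rintro rfl; rfl
    simp only [mul_ite, mul_zero, Finset.sum_ite_eq', Finset.mem_univ, if_true,
      if_neg h0, h1]
  rw [key]
  rw [Matrix.det_mul, Matrix.det_mul, Matrix.det_diagonal]
  have hprod : ∏ j, e j = p ^ i := by
    rw [Fin.prod_univ_succ]
    simp [e, Fin.succ_ne_zero]
  rw [hprod]
  rw [(addVal O).map_mul, (addVal O).map_mul]
  have hpi : addVal O (p ^ i) = (i : ℕ∞) := by
    have := IsDiscreteValuationRing.addVal_pow (R := O)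
    rw [addVal_pow, addVal_uniformizer hp]
    simp [nsmul_eq_mul, mul_comm]
  rw [hpi]
  calc (i : ℕ∞) ≤ addVal O A.det + (i : ℕ∞) := le_add_self
    _ ≤ addVal O A.det + (i : ℕ∞) + addVal O B.det := le_self_add
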